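/- arXiv:2209.14381 — 2 statements merged into one kernel-verified Lean document; each statement's English description precedes it below -/
import Mathlib

section
/- Let E be a Riesz space and let p, q : ℕ → ℕ satisfy the deferred property. The deferred statistical order limit is linear: if x_n →^{D_{st_o}}_{p,q} x and y_n →^{D_{st_o}}_{p,q} y in E and λ ∈ ℝ, then (x_n + y_n) →^{D_{st_o}}_{p,q} (x + y) and (λ x_n) →^{D_{st_o}}_{p,q} λ x. -/
open Filter Topology

variable {E : Type*} [AddCommGroup E] [Lattice E]
  [CovariantClass E E (· + ·) (· ≤ ·)] [Module ℝ E] [PosSMulMono ℝ E]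

/-- `p` and `q` satisfy the deferred property: `p n < q n` for all `n` and `q n → ∞`. -/
def DeferredProperty (p q : ℕ → ℕ) : Prop :=
  (∀ n, p n < q n) ∧ Tendsto q atTop atTop

open Classical in
/-- The ratio `|{k ∈ K : p n < k ≤ q n}| / (q n - p n)`. -/
noncomputable def deferredRatio (p q : ℕ → ℕ) (K : Set ℕ) (n : ℕ) : ℝ :=
  (((Finset.Ioc (p n) (q n)).filter (fun k => k ∈ K)).card : ℝ) / ((q n : ℝ) - (p n : ℝ))

/-- The deferred density of `K ⊆ ℕ` is `a`. -/
def DeferredDensity (p q : ℕ → ℕ) (K : Set ℕ) (a : ℝ) : Prop :=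
  Tendsto (deferredRatio p q K) atTop (nhds a)

/-- `z` is deferred statistical order decreasing to `0`: there is an (infinite) set
`K = {k₁ < k₂ < ⋯}` of deferred density one along which `z` is decreasing with infimum `0`. -/
def DStatDecreasing (p q : ℕ → ℕ) (z : ℕ → E) : Prop :=
  ∃ K : Set ℕ, K.Infinite ∧ DeferredDensity p q K 1 ∧
    (∀ i ∈ K, ∀ j ∈ K, i ≤ j → z j ≤ z i) ∧ IsGLB (z '' K) 0

/-- `x` is deferred statistical order convergent to `l`. -/
def DStatOrderConv (p q : ℕ → ℕ) (x : ℕ → E) (l : E) : Prop :=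
  ∃ z : ℕ → E, DStatDecreasing p q z ∧
    ∃ K : Set ℕ, K.Infinite ∧ DeferredDensity p q K 1 ∧ ∀ k ∈ K, |x k - l| ≤ z k

/-! ### Auxiliary lemmas -/

open Classical in
noncomputable def cfilter (K : Set ℕ) (s : Finset ℕ) : Finset ℕ := s.filter (fun k => k ∈ K)

theorem ratio_card (p q : ℕ → ℕ) (K : Set ℕ) (n : ℕ) :
    deferredRatio p q K n =
      ((cfilter K (Finset.Ioc (p n) (q n))).card : ℝ) / ((q n : ℝ) - (p n : ℝ)) :=
  rfl

theorem cfilter_mem {K : Set ℕ} {s : Finset ℕ} {k : ℕ} :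
    k ∈ cfilter K s ↔ k ∈ s ∧ k ∈ K := by
  classical
  unfold cfilter
  rw [Finset.filter_congr_decidable, Finset.mem_filter]

theorem cfilter_inter (K₁ K₂ : Set ℕ) (s : Finset ℕ) :
    cfilter (K₁ ∩ K₂) s = cfilter K₁ s ∩ cfilter K₂ s := by
  ext k
  simp only [cfilter_mem, Finset.mem_inter, Set.mem_inter_iff]
  tauto

theorem cfilter_subset (K : Set ℕ) (s : Finset ℕ) : cfilter K s ⊆ s := fun _ hk =>
  (cfilter_mem.1 hk).1

theorem density_inter (p q : ℕ → ℕ) (hpq : DeferredProperty p q) (K₁ K₂ : Set ℕ)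
    (h₁ : DeferredDensity p q K₁ 1) (h₂ : DeferredDensity p q K₂ 1) :
    DeferredDensity p q (K₁ ∩ K₂) 1 := by
  have hd : ∀ n, (0 : ℝ) < (q n : ℝ) - (p n : ℝ) := fun n => by
    have := (hpq.1 n); exact sub_pos.2 (by exact_mod_cast this)
  have key : ∀ n, deferredRatio p q K₁ n + deferredRatio p q K₂ n - 1
      ≤ deferredRatio p q (K₁ ∩ K₂) n ∧ deferredRatio p q (K₁ ∩ K₂) n ≤ deferredRatio p q K₁ n := by
    intro n
    set s := Finset.Ioc (p n) (q n) with hs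
    have hcard : ((s.card : ℕ) : ℝ) = (q n : ℝ) - (p n : ℝ) := by
      rw [hs, Nat.card_Ioc]
      push_cast [Nat.cast_sub (hpq.1 n).le]
      ring
    have hcards : ((cfilter K₁ s ∩ cfilter K₂ s).card : ℝ)
        + ((cfilter K₁ s ∪ cfilter K₂ s).card : ℝ)
        = ((cfilter K₁ s).card : ℝ) + ((cfilter K₂ s).card : ℝ) := by
      exact_mod_cast congrArg Nat.cast (Finset.card_inter_add_card_union _ _)
    have hub : ((cfilter K₁ s ∪ cfilter K₂ s).card : ℝ) ≤ (s.card : ℝ) := by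
      exact_mod_cast Finset.card_le_card
        (Finset.union_subset (cfilter_subset _ _) (cfilter_subset _ _))
    constructor
    · rw [ratio_card, ratio_card, ratio_card, cfilter_inter, ← hs]
      rw [← add_div, ← hcard, div_sub' (by rw [hcard]; exact (hd n).ne')]
      apply div_le_div_of_nonneg_right ?_ ?_
      · linarith
      · rw [hcard]; exact (hd n).le
    · rw [ratio_card, ratio_card, cfilter_inter, ← hs]
      apply div_le_div_of_nonneg_right ?_ (hd n).le
      exact_mod_cast Finset.card_le_card (Finset.inter_subset_left)
  have hlow : Tendsto (fun n => deferredRatio p q K₁ n + deferredRatio p q K₂ n - 1)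
      atTop (nhds 1) := by
    have := (h₁.add h₂).sub (tendsto_const_nhds (x := (1:ℝ)) (f := atTop))
    norm_num at this
    exact this
  exact tendsto_of_tendsto_of_tendsto_of_le_of_le hlow h₁
    (fun n => (key n).1) (fun n => (key n).2)

theorem infinite_of_density_one (p q : ℕ → ℕ) (hpq : DeferredProperty p q) (K : Set ℕ)
    (hK : DeferredDensity p q K 1) : K.Infinite := by
  by_contra hinf
  rw [Set.not_infinite] at hinf
  set F := hinf.toFinset with hF
  set M := F.sup id with hM
  set N := F.card with hN
  have hmem : ∀ k ∈ K, k ≤ M := fun k hk =>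
    Finset.le_sup (f := id) (hinf.mem_toFinset.2 hk)
  have h1 : ∀ᶠ n in atTop, (1:ℝ)/2 < deferredRatio p q K n :=
    hK.eventually (eventually_gt_nhds (by norm_num))
  have h2 : ∀ᶠ n in atTop, M + 2*N + 1 ≤ q n := hpq.2.eventually (eventually_ge_atTop _)
  obtain ⟨n, hr, hq⟩ := (h1.and h2).exists
  have hd : (0 : ℝ) < (q n : ℝ) - (p n : ℝ) := by
    have := (hpq.1 n); exact sub_pos.2 (by exact_mod_cast this)
  have hApos : 0 < (cfilter K (Finset.Ioc (p n) (q n))).card := by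
    by_contra h
    push_neg at h
    have h0 : (cfilter K (Finset.Ioc (p n) (q n))).card = 0 := Nat.le_zero.1 h
    rw [ratio_card, h0] at hr
    norm_num at hr
  obtain ⟨k, hkA⟩ := Finset.card_pos.1 hApos
  rw [cfilter_mem] at hkA
  have hpn : p n < M := lt_of_lt_of_le (Finset.mem_Ioc.1 hkA.1).1 (hmem k hkA.2)
  have hAN : (cfilter K (Finset.Ioc (p n) (q n))).card ≤ N := by
    apply Finset.card_le_card
    intro j hj
    exact hinf.mem_toFinset.2 (cfilter_mem.1 hj).2
  have hdlarge : (2*N + 1 : ℝ) < (q n : ℝ) - (p n : ℝ) := by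
    have ha : ((M : ℝ) + 2*N + 1) ≤ q n := by exact_mod_cast hq
    have hb : (p n : ℝ) < M := by exact_mod_cast hpn
    linarith
  have hle : deferredRatio p q K n ≤ (N : ℝ) / (2*N + 1) := by
    rw [ratio_card]
    have hNc : ((cfilter K (Finset.Ioc (p n) (q n))).card : ℝ) ≤ N := by exact_mod_cast hAN
    calc ((cfilter K (Finset.Ioc (p n) (q n))).card : ℝ) / ((q n : ℝ) - (p n : ℝ))
        ≤ (N : ℝ) / ((q n : ℝ) - (p n : ℝ)) := div_le_div_of_nonneg_right hNc hd.le
      _ ≤ (N : ℝ) / (2*N + 1) :=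
          div_le_div_of_nonneg_left (by positivity) (by positivity) hdlarge.le
  have hcon : (1:ℝ)/2 < (N:ℝ)/(2*N+1) := lt_of_lt_of_le hr hle
  rw [div_lt_div_iff₀ (by norm_num) (by positivity)] at hcon
  linarith

theorem my_smul_sup (c : ℝ) (hc : 0 < c) (u v : E) : c • (u ⊔ v) = c • u ⊔ c • v := by
  apply le_antisymm
  · rw [← smul_inv_smul₀ hc.ne' (c • u ⊔ c • v)]
    apply smul_le_smul_of_nonneg_left _ hc.le
    apply sup_le
    · calc u = c⁻¹ • (c • u) := (inv_smul_smul₀ hc.ne' u).symm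
        _ ≤ c⁻¹ • (c • u ⊔ c • v) :=
          smul_le_smul_of_nonneg_left le_sup_left (by positivity)
    · calc v = c⁻¹ • (c • v) := (inv_smul_smul₀ hc.ne' v).symm
        _ ≤ c⁻¹ • (c • u ⊔ c • v) :=
          smul_le_smul_of_nonneg_left le_sup_right (by positivity)
  · exact sup_le (smul_le_smul_of_nonneg_left le_sup_left hc.le)
      (smul_le_smul_of_nonneg_left le_sup_right hc.le)

theorem my_abs_smul (lam : ℝ) (v : E) : |lam • v| = |lam| • |v| := by
  rcases lt_trichotomy lam 0 with h | h | h
  · rw [abs_of_neg h]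
    rw [abs, abs, my_smul_sup (-lam) (by linarith) v (-v)]
    simp [neg_smul, sup_comm]
  · simp [h]
  · rw [abs_of_pos h, abs, abs, my_smul_sup lam h v (-v), smul_neg]

theorem glb_add (z₁ z₂ : ℕ → E) (K₁ K₂ : Set ℕ) (hinf : (K₁ ∩ K₂).Infinite)
    (mono₁ : ∀ i ∈ K₁, ∀ j ∈ K₁, i ≤ j → z₁ j ≤ z₁ i)
    (mono₂ : ∀ i ∈ K₂, ∀ j ∈ K₂, i ≤ j → z₂ j ≤ z₂ i)
    (g₁ : IsGLB (z₁ '' K₁) 0) (g₂ : IsGLB (z₂ '' K₂) 0) :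
    IsGLB ((fun k => z₁ k + z₂ k) '' (K₁ ∩ K₂)) 0 := by
  constructor
  · rintro _ ⟨k, hk, rfl⟩
    have h1 : (0:E) ≤ z₁ k := g₁.1 ⟨k, hk.1, rfl⟩
    have h2 : (0:E) ≤ z₂ k := g₂.1 ⟨k, hk.2, rfl⟩
    calc (0:E) = 0 + 0 := (add_zero 0).symm
      _ ≤ z₁ k + z₂ k := add_le_add h1 h2
  · intro w hw
    have key : ∀ l ∈ K₂, w ≤ z₂ l := by
      intro l hl
      have hlb : w - z₂ l ∈ lowerBounds (z₁ '' K₁) := by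
        rintro _ ⟨k, hk, rfl⟩
        obtain ⟨m, hm, hmgt⟩ := hinf.exists_gt (max k l)
        have hwm : w ≤ z₁ m + z₂ m := hw ⟨m, hm, rfl⟩
        have h1 : z₁ m ≤ z₁ k := mono₁ k hk m hm.1 (le_of_max_le_left hmgt.le)
        have h2 : z₂ m ≤ z₂ l := mono₂ l hl m hm.2 (le_of_max_le_right hmgt.le)
        have : w ≤ z₁ k + z₂ l := hwm.trans (add_le_add h1 h2)
        exact sub_le_iff_le_add.2 this
      exact sub_nonpos.1 (g₁.2 hlb)
    -- from key : w ≤ z₂ l for all l ∈ K₂, w is a lower bound of z₂ '' K₂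
    have : w ∈ lowerBounds (z₂ '' K₂) := by
      rintro _ ⟨l, hl, rfl⟩
      exact key l hl
    exact g₂.2 this

theorem glb_smul (c : ℝ) (hc : 0 ≤ c) (z : ℕ → E) (K : Set ℕ) (hne : K.Nonempty)
    (g : IsGLB (z '' K) 0) : IsGLB ((fun k => c • z k) '' K) 0 := by
  constructor
  · rintro _ ⟨k, hk, rfl⟩
    have h1 : (0:E) ≤ z k := g.1 ⟨k, hk, rfl⟩
    calc (0:E) = c • (0:E) := (smul_zero c).symm
      _ ≤ c • z k := smul_le_smul_of_nonneg_left h1 hc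
  · intro w hw
    rcases eq_or_lt_of_le hc with h | h
    · obtain ⟨k, hk⟩ := hne
      have := hw ⟨k, hk, rfl⟩
      simpa [← h] using this
    · have hlb : c⁻¹ • w ∈ lowerBounds (z '' K) := by
        rintro _ ⟨k, hk, rfl⟩
        have hwk : w ≤ c • z k := hw ⟨k, hk, rfl⟩
        calc c⁻¹ • w ≤ c⁻¹ • (c • z k) :=
              smul_le_smul_of_nonneg_left hwk (by positivity)
          _ = z k := inv_smul_smul₀ h.ne' (z k)
      have h0 : c⁻¹ • w ≤ 0 := g.2 hlb
      calc w = c • (c⁻¹ • w) := (smul_inv_smul₀ h.ne' w).symm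
        _ ≤ c • (0:E) := smul_le_smul_of_nonneg_left h0 h.le
        _ = 0 := smul_zero c

theorem stmt6 (p q : ℕ → ℕ) (hpq : DeferredProperty p q) (x y : ℕ → E) (a b : E)
    (lam : ℝ) (hx : DStatOrderConv p q x a) (hy : DStatOrderConv p q y b) :
    DStatOrderConv p q (fun n => x n + y n) (a + b) ∧
      DStatOrderConv p q (fun n => lam • x n) (lam • a) := by
  obtain ⟨z₁, ⟨K₁, hK₁inf, hK₁d, hz₁mono, hz₁glb⟩, L₁, hL₁inf, hL₁d, hxb⟩ := hx
  obtain ⟨z₂, ⟨K₂, hK₂inf, hK₂d, hz₂mono, hz₂glb⟩, L₂, hL₂inf, hL₂d, hyb⟩ := hy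
  constructor
  · -- the sum
    have hKd : DeferredDensity p q (K₁ ∩ K₂) 1 := density_inter p q hpq K₁ K₂ hK₁d hK₂d
    have hKinf : (K₁ ∩ K₂).Infinite := infinite_of_density_one p q hpq _ hKd
    have hLd : DeferredDensity p q (L₁ ∩ L₂) 1 := density_inter p q hpq L₁ L₂ hL₁d hL₂d
    have hLinf : (L₁ ∩ L₂).Infinite := infinite_of_density_one p q hpq _ hLd
    refine ⟨fun k => z₁ k + z₂ k, ⟨K₁ ∩ K₂, hKinf, hKd, ?_, ?_⟩, L₁ ∩ L₂, hLinf, hLd, ?_⟩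
    · intro i hi j hj hij
      exact add_le_add (hz₁mono i hi.1 j hj.1 hij) (hz₂mono i hi.2 j hj.2 hij)
    · exact glb_add z₁ z₂ K₁ K₂ hKinf hz₁mono hz₂mono hz₁glb hz₂glb
    · intro k hk
      have : |x k + y k - (a + b)| ≤ |x k - a| + |y k - b| := by
        have h := abs_add_le (x k - a) (y k - b)
        have he : x k - a + (y k - b) = x k + y k - (a + b) := by abel
        rwa [he] at h
      exact this.trans (add_le_add (hxb k hk.1) (hyb k hk.2))
  · -- the scalar multiple
    refine ⟨fun k => |lam| • z₁ k, ⟨K₁, hK₁inf, hK₁d, ?_, ?_⟩, L₁, hL₁inf, hL₁d, ?_⟩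
    · intro i hi j hj hij
      exact smul_le_smul_of_nonneg_left (hz₁mono i hi j hj hij) (abs_nonneg lam)
    · exact glb_smul |lam| (abs_nonneg lam) z₁ K₁ hK₁inf.nonempty hz₁glb
    · intro k hk
      have : lam • x k - lam • a = lam • (x k - a) := (smul_sub lam (x k) a).symm
      rw [this, my_abs_smul]
      exact smul_le_smul_of_nonneg_left (hxb k hk) (abs_nonneg lam)
end

section
/- Let E be a Riesz space and let p, q : ℕ → ℕ satisfy the deferred property. If x_n →^{D_{st_o}}_{p,q} x and y_n →^{D_{st_o}}_{p,q} y in E, then (x_n ∨ y_n) →^{D_{st_o}}_{p,q} (x ∨ y). -/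
open Filter Topology

variable {E : Type*} [AddCommGroup E] [Lattice E]
  [CovariantClass E E (· + ·) (· ≤ ·)] [Module ℝ E] [PosSMulMono ℝ E]

lemma ratio_nonneg (p q : ℕ → ℕ) (hpq : DeferredProperty p q) (K : Set ℕ) (n : ℕ) :
    0 ≤ deferredRatio p q K n := by
  have := hpq.1 n
  apply div_nonneg (by positivity)
  have : (p n : ℝ) < q n := by exact_mod_cast this
  linarith

lemma density_one_infinite (p q : ℕ → ℕ) (hpq : DeferredProperty p q) (K : Set ℕ)
    (h : DeferredDensity p q K 1) : K.Infinite := by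
  classical
  by_contra hfin
  rw [Set.not_infinite] at hfin
  obtain ⟨M, hM⟩ := hfin.bddAbove
  have key : ∀ n, q n > M → deferredRatio p q K n ≤ (M : ℝ) / ((q n : ℝ) - M) := by
    intro n hn
    have hpn := hpq.1 n
    have hsub : ((Finset.Ioc (p n) (q n)).filter (fun k => k ∈ K)) ⊆ Finset.Ioc (p n) M := by
      intro k hk
      simp only [Finset.mem_filter, Finset.mem_Ioc] at hk ⊢
      exact ⟨hk.1.1, hM hk.2⟩
    have hcard : ((Finset.Ioc (p n) (q n)).filter (fun k => k ∈ K)).card ≤ M :=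
      le_trans (Finset.card_le_card hsub) (by simp [Nat.card_Ioc])
    by_cases hp : p n ≥ M
    · have : ((Finset.Ioc (p n) (q n)).filter (fun k => k ∈ K)) = ∅ := by
        apply Finset.eq_empty_of_forall_notMem
        intro k hk
        have := hsub hk
        simp [Finset.mem_Ioc] at this
        omega
      have hd : (0:ℝ) < (q n : ℝ) - M := by
        have : (M:ℝ) < q n := by exact_mod_cast hn
        linarith
      rw [deferredRatio, this]
      simp
      positivity
    · push_neg at hp
      have h1 : (0:ℝ) < (q n : ℝ) - M := by
        have : (M:ℝ) < q n := by exact_mod_cast hn; 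
        linarith
      have h2 : (0:ℝ) < (q n : ℝ) - p n := by
        have : (p n:ℝ) < q n := by exact_mod_cast hpn
        linarith
      have h3 : ((q n : ℝ) - M) ≤ ((q n : ℝ) - p n) := by
        have : (p n : ℝ) ≤ M := by exact_mod_cast hp.le
        linarith
      have hcR : (((Finset.Ioc (p n) (q n)).filter (fun k => k ∈ K)).card : ℝ) ≤ M := by
        exact_mod_cast hcard
      rw [deferredRatio]
      exact div_le_div₀ (by positivity) hcR h1 h3
  have hto : Tendsto (fun n => (M : ℝ) / ((q n : ℝ) - M)) atTop (nhds 0) := by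
    apply Tendsto.div_atTop tendsto_const_nhds
    simp only [sub_eq_add_neg]
    exact tendsto_atTop_add_const_right _ _ (tendsto_natCast_atTop_atTop.comp hpq.2)
  have hzero : Tendsto (deferredRatio p q K) atTop (nhds 0) := by
    apply squeeze_zero' (Eventually.of_forall (ratio_nonneg p q hpq K)) ?_ hto
    filter_upwards [hpq.2.eventually_gt_atTop M] with n hn
    exact key n hn
  exact absurd (tendsto_nhds_unique h hzero) one_ne_zero

lemma density_inter_s7 (p q : ℕ → ℕ) (hpq : DeferredProperty p q) (A B : Set ℕ)
    (hA : DeferredDensity p q A 1) (hB : DeferredDensity p q B 1) :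
    DeferredDensity p q (A ∩ B) 1 := by
  classical
  have hd : ∀ n, (0:ℝ) < (q n : ℝ) - p n := by
    intro n
    have : (p n : ℝ) < q n := by exact_mod_cast hpq.1 n
    linarith
  have hup : ∀ n, deferredRatio p q (A ∩ B) n ≤ deferredRatio p q A n := by
    intro n
    unfold deferredRatio
    gcongr
    · exact (hd n).le
    · intro k hk
      simp only [Finset.mem_filter, Set.mem_inter_iff] at hk ⊢
      tauto
  have hlow : ∀ n, deferredRatio p q A n + deferredRatio p q B n - 1 ≤
      deferredRatio p q (A ∩ B) n := by
    intro n
    set I := Finset.Ioc (p n) (q n) with hI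
    have hcard : (I.filter (fun k => k ∈ A)).card + (I.filter (fun k => k ∈ B)).card ≤
        I.card + (I.filter (fun k => k ∈ A ∩ B)).card := by
      have h1 : (I.filter (fun k => k ∈ A)) ∪ (I.filter (fun k => k ∈ B)) ⊆ I :=
        Finset.union_subset (Finset.filter_subset _ _) (Finset.filter_subset _ _)
      have h2 : (I.filter (fun k => k ∈ A)) ∩ (I.filter (fun k => k ∈ B)) =
          I.filter (fun k => k ∈ A ∩ B) := by
        rw [← Finset.filter_and]
        rfl
      calc (I.filter (fun k => k ∈ A)).card + (I.filter (fun k => k ∈ B)).card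
          = ((I.filter (fun k => k ∈ A)) ∪ (I.filter (fun k => k ∈ B))).card +
            ((I.filter (fun k => k ∈ A)) ∩ (I.filter (fun k => k ∈ B))).card :=
            (Finset.card_union_add_card_inter _ _).symm
        _ ≤ I.card + (I.filter (fun k => k ∈ A ∩ B)).card := by
            rw [h2]; exact Nat.add_le_add_right (Finset.card_le_card h1) _
    have hIcard : (I.card : ℝ) = (q n : ℝ) - p n := by
      rw [hI, Nat.card_Ioc]
      have := (hpq.1 n).le
      push_cast [Nat.cast_sub this]
      ring
    have hcR : ((I.filter (fun k => k ∈ A)).card : ℝ) + ((I.filter (fun k => k ∈ B)).card : ℝ) ≤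
        ((q n : ℝ) - p n) + ((I.filter (fun k => k ∈ A ∩ B)).card : ℝ) := by
      rw [← hIcard]
      exact_mod_cast hcard
    have e : deferredRatio p q A n + deferredRatio p q B n - 1 =
        (((I.filter (fun k => k ∈ A)).card : ℝ) + ((I.filter (fun k => k ∈ B)).card : ℝ)
          - ((q n : ℝ) - p n)) / ((q n : ℝ) - p n) := by
      unfold deferredRatio
      rw [← hI, ← add_div, sub_div, div_self (hd n).ne']
    have hbridge : deferredRatio p q (A ∩ B) n =
        ((I.filter (fun k => k ∈ A ∩ B)).card : ℝ) / ((q n : ℝ) - p n) := by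
      unfold deferredRatio
      rw [← hI]
      congr!
    rw [e, hbridge]
    gcongr
    · exact (hd n).le
    · linarith [hcR]
  have hg : Tendsto (fun n => deferredRatio p q A n + deferredRatio p q B n - 1)
      atTop (nhds 1) := by
    have := (hA.add hB).sub_const 1
    norm_num at this
    exact this
  exact tendsto_of_tendsto_of_tendsto_of_le_of_le hg hA hlow hup


lemma isGLB_restrict (z : ℕ → E) (K L : Set ℕ) (hKL : K ⊆ L)
    (hK : ∀ m, ∃ j ∈ K, m ≤ j) (hanti : ∀ i ∈ L, ∀ j ∈ L, i ≤ j → z j ≤ z i)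
    (h : IsGLB (z '' L) 0) : IsGLB (z '' K) 0 := by
  constructor
  · rintro _ ⟨k, hk, rfl⟩
    exact h.1 ⟨k, hKL hk, rfl⟩
  · intro c hc
    apply h.2
    rintro _ ⟨k, hk, rfl⟩
    obtain ⟨j, hj, hkj⟩ := hK k
    exact le_trans (hc ⟨j, hj, rfl⟩) (hanti k hk j (hKL hj) hkj)

lemma isGLB_add_of_anti (z₁ z₂ : ℕ → E) (K : Set ℕ) (hK : ∀ m, ∃ j ∈ K, m ≤ j)
    (h1a : ∀ i ∈ K, ∀ j ∈ K, i ≤ j → z₁ j ≤ z₁ i)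
    (h2a : ∀ i ∈ K, ∀ j ∈ K, i ≤ j → z₂ j ≤ z₂ i)
    (h1 : IsGLB (z₁ '' K) 0) (h2 : IsGLB (z₂ '' K) 0) :
    IsGLB ((fun n => z₁ n + z₂ n) '' K) 0 := by
  constructor
  · rintro _ ⟨k, hk, rfl⟩
    have a1 : (0:E) ≤ z₁ k := h1.1 ⟨k, hk, rfl⟩
    have a2 : (0:E) ≤ z₂ k := h2.1 ⟨k, hk, rfl⟩
    simpa using add_le_add a1 a2
  · intro c hc
    have key : ∀ k ∈ K, c ≤ z₁ k := by
      intro k hk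
      have : c - z₁ k ≤ 0 := by
        apply h2.2
        rintro _ ⟨j, hj, rfl⟩
        obtain ⟨m, hm, hmax⟩ := hK (max j k)
        have hjm : j ≤ m := le_trans (le_max_left _ _) hmax
        have hkm : k ≤ m := le_trans (le_max_right _ _) hmax
        have hcm : c ≤ z₁ m + z₂ m := hc ⟨m, hm, rfl⟩
        have : c ≤ z₂ j + z₁ k := by
          calc c ≤ z₁ m + z₂ m := hcm
            _ ≤ z₁ k + z₂ j := add_le_add (h1a k hk m hm hkm) (h2a j hj m hm hjm)
            _ = z₂ j + z₁ k := add_comm _ _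
        exact sub_le_iff_le_add.mpr this
      exact sub_nonpos.mp this
    apply h1.2
    rintro _ ⟨k, hk, rfl⟩
    exact key k hk

lemma abs_sup_sub_sup_le (u v w t : E) : |u ⊔ v - w ⊔ t| ≤ |u - w| + |v - t| := by
  have h1 : |u ⊔ v - w ⊔ v| ≤ |u - w| := abs_sup_sub_sup_le_abs u w v
  have h2 : |w ⊔ v - w ⊔ t| ≤ |v - t| := by
    rw [sup_comm w v, sup_comm w t]
    exact abs_sup_sub_sup_le_abs v t w
  calc |u ⊔ v - w ⊔ t| = |(u ⊔ v - w ⊔ v) + (w ⊔ v - w ⊔ t)| := by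
        rw [sub_add_sub_cancel]
    _ ≤ |u ⊔ v - w ⊔ v| + |w ⊔ v - w ⊔ t| := abs_add_le _ _
    _ ≤ |u - w| + |v - t| := add_le_add h1 h2


theorem stmt7 (p q : ℕ → ℕ) (hpq : DeferredProperty p q) (x y : ℕ → E) (a b : E)
    (hx : DStatOrderConv p q x a) (hy : DStatOrderConv p q y b) :
    DStatOrderConv p q (fun n => x n ⊔ y n) (a ⊔ b) := by
  obtain ⟨z₁, ⟨K1, hK1inf, hK1d, hK1anti, hK1glb⟩, Kx, hKxinf, hKxd, hKxb⟩ := hx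
  obtain ⟨z₂, ⟨K2, hK2inf, hK2d, hK2anti, hK2glb⟩, Ky, hKyinf, hKyd, hKyb⟩ := hy
  set K := ((K1 ∩ K2) ∩ Kx) ∩ Ky with hK
  have hKd : DeferredDensity p q K 1 :=
    density_inter_s7 p q hpq _ _ (density_inter_s7 p q hpq _ _
      (density_inter_s7 p q hpq _ _ hK1d hK2d) hKxd) hKyd
  have hKinf : K.Infinite := density_one_infinite p q hpq K hKd
  have hub : ∀ m, ∃ j ∈ K, m ≤ j := fun m => by
    obtain ⟨j, hj, h2⟩ := hKinf.exists_gt m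
    exact ⟨j, hj, h2.le⟩
  have hsub1 : K ⊆ K1 := fun k hk => hk.1.1.1
  have hsub2 : K ⊆ K2 := fun k hk => hk.1.1.2
  have hsubx : K ⊆ Kx := fun k hk => hk.1.2
  have hsuby : K ⊆ Ky := fun k hk => hk.2
  have h1a : ∀ i ∈ K, ∀ j ∈ K, i ≤ j → z₁ j ≤ z₁ i :=
    fun i hi j hj h => hK1anti i (hsub1 hi) j (hsub1 hj) h
  have h2a : ∀ i ∈ K, ∀ j ∈ K, i ≤ j → z₂ j ≤ z₂ i :=
    fun i hi j hj h => hK2anti i (hsub2 hi) j (hsub2 hj) h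
  refine ⟨fun n => z₁ n + z₂ n, ⟨K, hKinf, hKd, ?_, ?_⟩, K, hKinf, hKd, ?_⟩
  · intro i hi j hj h
    exact add_le_add (h1a i hi j hj h) (h2a i hi j hj h)
  · exact isGLB_add_of_anti z₁ z₂ K hub h1a h2a
      (isGLB_restrict z₁ K K1 hsub1 hub hK1anti hK1glb)
      (isGLB_restrict z₂ K K2 hsub2 hub hK2anti hK2glb)
  · intro k hk
    show |x k ⊔ y k - a ⊔ b| ≤ z₁ k + z₂ k
    calc |x k ⊔ y k - a ⊔ b| ≤ |x k - a| + |y k - b| := abs_sup_sub_sup_le _ _ _ _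
      _ ≤ z₁ k + z₂ k := add_le_add (hKxb k (hsubx hk)) (hKyb k (hsuby hk))
end
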